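/- Let M be an irreducible nonnegative K×K matrix with spectral radius 1. Then the cofactor matrix com(M − I_K) has rank 1 and can be written as com(M − I_K)^⊺ = λ Y X^⊺ for some nonzero λ ∈ ℝ, where X is a left 1-eigenvector and Y a right 1-eigenvector of M, both with positive coordinates. -/

import Mathlib

open scoped BigOperators

/-- Spectral radius of a real square matrix. -/
noncomputable def matrixSpectralRadius {n : ℕ} (M : Matrix (Fin n) (Fin n) ℝ) : ℝ :=
  sSup ((fun z : ℂ => ‖z‖) '' spectrum ℂ (M.map (Complex.ofReal)))

section PerronFrobeniusAux

open Matrix Polynomial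

lemma charpoly_eval' {n : Type*} [Fintype n] [DecidableEq n] {R : Type*} [CommRing R]
    (B : Matrix n n R) (r : R) : B.charpoly.eval r = (r • (1 : Matrix n n R) - B).det := by
  rw [Matrix.charpoly, _root_.eval_det, Matrix.matPolyEquiv_charmatrix]
  simp [smul_one_eq_diagonal]

lemma mem_spectrum_iff_det' {n : Type*} [Fintype n] [DecidableEq n] (B : Matrix n n ℂ) (μ : ℂ) :
    μ ∈ spectrum ℂ B ↔ (μ • (1 : Matrix n n ℂ) - B).det = 0 := by
  rw [spectrum.mem_iff, Matrix.isUnit_iff_isUnit_det, isUnit_iff_ne_zero, not_not]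
  congr! 2
  ext i j
  simp [Matrix.algebraMap_matrix_apply, Matrix.one_apply, Matrix.smul_apply, mul_comm]

lemma mem_spectrum_iff_root {n : Type*} [Fintype n] [DecidableEq n] (B : Matrix n n ℂ) (μ : ℂ) :
    μ ∈ spectrum ℂ B ↔ B.charpoly.eval μ = 0 := by
  rw [mem_spectrum_iff_det', charpoly_eval']

lemma abs_msum (s : Multiset ℂ) : ‖s.sum‖ ≤ (s.map (fun z : ℂ => ‖z‖)).sum := by
  induction s using Multiset.induction with
  | empty => simp
  | cons a s ih =>
    simp only [Multiset.sum_cons, Multiset.map_cons]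
    exact le_trans (norm_add_le _ _) (by linarith)

-- trace bound
lemma trace_pow_le {K : ℕ} (hK : 0 < K) (B : Matrix (Fin K) (Fin K) ℂ)
    (hspec : ∀ μ ∈ spectrum ℂ B, ‖μ‖ ≤ 1) (n : ℕ) (hn : 0 < n) :
    ‖(B ^ n).trace‖ ≤ K := by
  have : Nonempty (Fin K) := Fin.pos_iff_nonempty.mp hK
  rw [Matrix.trace_eq_sum_roots_charpoly]
  have hroots : ∀ μ ∈ (B ^ n).charpoly.roots, ‖μ‖ ≤ 1 := by
    intro μ hμ
    have h1 : μ ∈ spectrum ℂ (B ^ n) := by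
      rw [mem_spectrum_iff_root]
      exact (Polynomial.isRoot_of_mem_roots hμ)
    have h2 : spectrum ℂ (B ^ n) = (fun z => z ^ n) '' spectrum ℂ B := by
      have := spectrum.map_polynomial_aeval_of_degree_pos (𝕜 := ℂ) B (X ^ n)
        (by simpa using (by positivity : (0:ℕ) < n))
      simpa using this
    rw [h2] at h1
    obtain ⟨ζ, hζ, rfl⟩ := h1
    calc ‖ζ ^ n‖ = ‖ζ‖ ^ n := by simp
    _ ≤ 1 ^ n := pow_le_pow_left₀ (by positivity) (hspec ζ hζ) n
    _ = 1 := one_pow n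
  calc ‖(B ^ n).charpoly.roots.sum‖
      ≤ ((B ^ n).charpoly.roots.map (fun z : ℂ => ‖z‖)).sum := abs_msum _
    _ ≤ (Multiset.card ((B ^ n).charpoly.roots.map (fun z : ℂ => ‖z‖))) • (1:ℝ) := by
        apply Multiset.sum_le_card_nsmul
        intro x hx
        obtain ⟨μ, hμ, rfl⟩ := Multiset.mem_map.mp hx
        exact hroots μ hμ
    _ ≤ K := by
        rw [Multiset.card_map, nsmul_eq_mul, mul_one]
        have h1 := (B ^ n).charpoly.card_roots'
        have hd : (B ^ n).charpoly.natDegree = K := by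
          simp [Matrix.charpoly_natDegree_eq_dim]
        rw [hd] at h1
        exact_mod_cast h1

section Real
variable {K : ℕ} (M : Matrix (Fin K) (Fin K) ℝ)

lemma pow_nonneg' (hM : ∀ i j, 0 ≤ M i j) (n : ℕ) : ∀ i j, 0 ≤ (M ^ n) i j := by
  induction n with
  | zero =>
    intro i j
    rcases eq_or_ne i j with rfl | h
    · simp
    · simp [pow_zero, Matrix.one_apply, h]
  | succ n ih =>
    intro i j
    rw [pow_succ, Matrix.mul_apply]
    exact Finset.sum_nonneg fun k _ => mul_nonneg (ih i k) (hM k j)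

lemma map_pow' (n : ℕ) :
    (M.map Complex.ofReal) ^ n = (M ^ n).map Complex.ofReal := by
  induction n with
  | zero => simp
  | succ n ih =>
    rw [pow_succ, pow_succ, ih]
    ext i j
    simp [Matrix.mul_apply, Matrix.map_apply]

lemma trace_map' (A : Matrix (Fin K) (Fin K) ℝ) :
    (A.map Complex.ofReal).trace = Complex.ofReal A.trace := by
  simp [Matrix.trace, Matrix.diag, Matrix.map_apply]

lemma diag_pow_le (hK : 0 < K) (hM : ∀ i j, 0 ≤ M i j)
    (hspec : ∀ μ ∈ spectrum ℂ (M.map Complex.ofReal), ‖μ‖ ≤ 1)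
    {n : ℕ} (hn : 0 < n) (i : Fin K) : (M ^ n) i i ≤ K := by
  have h1 := trace_pow_le hK (M.map Complex.ofReal) hspec n hn
  rw [map_pow', trace_map', Complex.norm_real, Real.norm_eq_abs] at h1
  have h2 : (M ^ n) i i ≤ (M ^ n).trace := by
    rw [Matrix.trace]
    exact Finset.single_le_sum (fun k _ => pow_nonneg' M hM n k k) (Finset.mem_univ i)
  calc (M ^ n) i i ≤ (M ^ n).trace := h2
  _ ≤ |(M ^ n).trace| := le_abs_self _
  _ ≤ K := h1

lemma entry_pow_le (hK : 0 < K) (hM : ∀ i j, 0 ≤ M i j)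
    (hirr : ∀ i j, ∃ m : ℕ, 0 < m ∧ 0 < (M ^ m) i j)
    (hspec : ∀ μ ∈ spectrum ℂ (M.map Complex.ofReal), ‖μ‖ ≤ 1) :
    ∃ C : ℝ, 0 < C ∧ ∀ (n : ℕ) (i j : Fin K), (M ^ n) i j ≤ C := by
  have : Nonempty (Fin K) := Fin.pos_iff_nonempty.mp hK
  choose m hm hmp using hirr
  set f : Fin K × Fin K → ℝ := fun p => (K : ℝ) / (M ^ m p.1 p.2) p.1 p.2 with hf
  refine ⟨max 1 (Finset.univ.sup' (Finset.univ_nonempty) f), lt_of_lt_of_le one_pos (le_max_left _ _), ?_⟩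
  intro n i j
  have key : (M ^ n) i j * (M ^ m j i) j i ≤ K := by
    have h1 : (M ^ (m j i + n)) j j ≤ K := diag_pow_le M hK hM hspec (by have := hm j i; omega) j
    have h2 : (M ^ m j i) j i * (M ^ n) i j ≤ (M ^ (m j i + n)) j j := by
      rw [pow_add, Matrix.mul_apply]
      exact Finset.single_le_sum (f := fun k => (M ^ m j i) j k * (M ^ n) k j)
        (fun k _ => mul_nonneg (pow_nonneg' M hM _ _ _) (pow_nonneg' M hM _ _ _))
        (Finset.mem_univ i)
    linarith [h2, h1, mul_comm ((M ^ m j i) j i) ((M ^ n) i j)]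
  have hpos := hmp j i
  have h3 : (M ^ n) i j ≤ f (j, i) := by
    rw [hf]
    dsimp only
    rw [le_div_iff₀ hpos]
    exact key
  exact le_trans h3 (le_trans (Finset.le_sup' f (Finset.mem_univ (j, i))) (le_max_right _ _))

end Real

section PF
variable {K : ℕ} (M : Matrix (Fin K) (Fin K) ℝ)

lemma mulVec_apply' (x : Fin K → ℝ) (i : Fin K) :
    (M.mulVec x) i = ∑ j, M i j * x j := rfl

lemma mulVec_mono (hM : ∀ i j, 0 ≤ M i j) {x y : Fin K → ℝ} (h : ∀ i, x i ≤ y i) (i : Fin K) :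
    (M.mulVec x) i ≤ (M.mulVec y) i := by
  rw [mulVec_apply', mulVec_apply']
  exact Finset.sum_le_sum fun j _ => mul_le_mul_of_nonneg_left (h j) (hM i j)

lemma pow_mulVec_fixed (hfix : M.mulVec w = w) (m : ℕ) : (M ^ m).mulVec w = w := by
  induction m with
  | zero => simp [Matrix.one_mulVec]
  | succ m ih => rw [pow_succ', ← Matrix.mulVec_mulVec, ih, hfix]

lemma fixed_pos (hirr : ∀ i j, ∃ m : ℕ, 0 < m ∧ 0 < (M ^ m) i j)
    {w : Fin K → ℝ} (hw0 : ∀ i, 0 ≤ w i) (hw : w ≠ 0) (hMnn : ∀ i j, 0 ≤ M i j)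
    (hfix : M.mulVec w = w) : ∀ i, 0 < w i := by
  obtain ⟨j0, hj0⟩ : ∃ j0, 0 < w j0 := by
    by_contra h
    push_neg at h
    exact hw (funext fun i => le_antisymm (h i) (hw0 i))
  intro i
  obtain ⟨m, _, hmp⟩ := hirr i j0
  have h1 : (M ^ m).mulVec w = w := pow_mulVec_fixed M hfix m
  have h2 : w i = ∑ j, (M ^ m) i j * w j := by rw [← mulVec_apply', h1]
  rw [h2]
  exact Finset.sum_pos' (fun j _ => mul_nonneg (pow_nonneg' M hMnn m i j) (hw0 j))
    ⟨j0, Finset.mem_univ j0, mul_pos hmp hj0⟩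

lemma exists_pos_fixed (hK : 0 < K) (hM : ∀ i j, 0 ≤ M i j)
    (hirr : ∀ i j, ∃ m : ℕ, 0 < m ∧ 0 < (M ^ m) i j)
    (hC : ∃ C : ℝ, 0 < C ∧ ∀ (n : ℕ) (i j : Fin K), (M ^ n) i j ≤ C)
    (hw : ∃ w : Fin K → ℝ, (∀ i, 0 ≤ w i) ∧ w ≠ 0 ∧ ∀ i, w i ≤ (M.mulVec w) i) :
    ∃ w : Fin K → ℝ, (∀ i, 0 < w i) ∧ M.mulVec w = w := by
  have hne : Nonempty (Fin K) := Fin.pos_iff_nonempty.mp hK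
  obtain ⟨C, hCpos, hCle⟩ := hC
  obtain ⟨w, hw0, hwne, hsub⟩ := hw
  -- it suffices to show M.mulVec w = w
  suffices hfix : M.mulVec w = w by
    exact ⟨w, fixed_pos M hirr hw0 hwne hM hfix, hfix⟩
  by_contra hne'
  -- construct the positive matrix S
  choose m hm1 hmp using hirr
  set N : ℕ := Finset.univ.sup (fun p : Fin K × Fin K => m p.1 p.2) with hN
  set S : Matrix (Fin K) (Fin K) ℝ := ∑ k ∈ Finset.Icc 1 N, M ^ k with hS
  have hSapp : ∀ i j, S i j = ∑ k ∈ Finset.Icc 1 N, (M ^ k) i j := by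
    intro i j; rw [hS, Matrix.sum_apply]
  have hSpos : ∀ i j, 0 < S i j := by
    intro i j
    rw [hSapp]
    refine Finset.sum_pos' (fun k _ => pow_nonneg' M hM k i j) ⟨m i j, ?_, hmp i j⟩
    rw [Finset.mem_Icc]
    exact ⟨hm1 i j, Finset.le_sup (f := fun p : Fin K × Fin K => m p.1 p.2)
      (Finset.mem_univ (i, j))⟩
  have hScomm : M * S = S * M := by
    rw [hS, Finset.mul_sum, Finset.sum_mul]
    exact Finset.sum_congr rfl fun k _ => (Commute.pow_right (Commute.refl M) k).symm ▸ rfl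
  -- d
  set d : Fin K → ℝ := fun i => (M.mulVec w) i - w i with hd
  have hd0 : ∀ i, 0 ≤ d i := fun i => sub_nonneg.mpr (hsub i)
  obtain ⟨i0, hi0⟩ : ∃ i0, 0 < d i0 := by
    by_contra h
    push_neg at h
    exact hne' (funext fun i => by have := le_antisymm (h i) (hd0 i); rw [hd] at this; dsimp at this; linarith)
  set u : Fin K → ℝ := S.mulVec w with hu
  obtain ⟨j0, hj0⟩ : ∃ j0, 0 < w j0 := by
    by_contra h
    push_neg at h
    exact hwne (funext fun i => le_antisymm (h i) (hw0 i))
  have hupos : ∀ i, 0 < u i := by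
    intro i
    rw [hu, mulVec_apply']
    exact Finset.sum_pos' (fun j _ => mul_nonneg (hSpos i j).le (hw0 j))
      ⟨j0, Finset.mem_univ j0, mul_pos (hSpos i j0) hj0⟩
  have hkey : ∀ i, u i < (M.mulVec u) i := by
    intro i
    have h1 : M.mulVec u = S.mulVec (M.mulVec w) := by
      rw [hu, Matrix.mulVec_mulVec, Matrix.mulVec_mulVec, hScomm]
    have h2 : (M.mulVec u) i - u i = (S.mulVec d) i := by
      rw [h1, hu, hd]
      rw [mulVec_apply', mulVec_apply', mulVec_apply']
      rw [← Finset.sum_sub_distrib]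
      exact Finset.sum_congr rfl fun j _ => by ring
    have h3 : 0 < (S.mulVec d) i := by
      rw [mulVec_apply']
      exact Finset.sum_pos' (fun j _ => mul_nonneg (hSpos i j).le (hd0 j))
        ⟨i0, Finset.mem_univ i0, mul_pos (hSpos i i0) hi0⟩
    linarith
  -- the growth rate r
  set r : ℝ := Finset.univ.inf' Finset.univ_nonempty (fun i => (M.mulVec u) i / u i) with hr
  have hr1 : 1 < r := by
    rw [hr, Finset.lt_inf'_iff]
    intro i _
    rw [lt_div_iff₀ (hupos i)]
    simpa using hkey i
  have hru : ∀ i, r * u i ≤ (M.mulVec u) i := by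
    intro i
    have h1 : r ≤ (M.mulVec u) i / u i :=
      Finset.inf'_le _ (Finset.mem_univ i)
    calc r * u i ≤ ((M.mulVec u) i / u i) * u i :=
          mul_le_mul_of_nonneg_right h1 (hupos i).le
    _ = (M.mulVec u) i := div_mul_cancel₀ _ (hupos i).ne'
  have hgrow : ∀ (n : ℕ) (i : Fin K), r ^ n * u i ≤ ((M ^ n).mulVec u) i := by
    intro n
    induction n with
    | zero => intro i; simp [Matrix.one_mulVec]
    | succ n ih =>
      intro i
      have h1 : (M ^ (n+1)).mulVec u = M.mulVec ((M ^ n).mulVec u) := by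
        have h0 := Matrix.mulVec_mulVec u M (M ^ n)
        rw [← pow_succ'] at h0
        exact h0.symm
      rw [h1]
      have h2 : (M.mulVec (fun j => r ^ n * u j)) i ≤ (M.mulVec ((M ^ n).mulVec u)) i :=
        mulVec_mono M hM (fun j => ih j) i
      have h3 : (M.mulVec (fun j => r ^ n * u j)) i = r ^ n * (M.mulVec u) i := by
        rw [mulVec_apply', mulVec_apply', Finset.mul_sum]
        exact Finset.sum_congr rfl fun j _ => by ring
      have h4 : r ^ (n+1) * u i ≤ r ^ n * (M.mulVec u) i := by
        rw [pow_succ]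
        calc r ^ n * r * u i = r ^ n * (r * u i) := by ring
        _ ≤ r ^ n * (M.mulVec u) i :=
            mul_le_mul_of_nonneg_left (hru i) (by positivity)
      linarith
  -- contradiction
  obtain ⟨i⟩ := hne
  set B : ℝ := C * ∑ j, u j with hB
  have hbd : ∀ n : ℕ, ((M ^ n).mulVec u) i ≤ B := by
    intro n
    rw [mulVec_apply', hB, Finset.mul_sum]
    exact Finset.sum_le_sum fun j _ =>
      mul_le_mul_of_nonneg_right (hCle n i j) (hupos j).le
  obtain ⟨n, hn⟩ := pow_unbounded_of_one_lt (B / u i) hr1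
  have := hgrow n i
  have h5 : B < r ^ n * u i := by
    rw [div_lt_iff₀ (hupos i)] at hn
    linarith
  linarith [hbd n]

end PF

section Spec
variable {K : ℕ} (M : Matrix (Fin K) (Fin K) ℝ)

lemma spectrum_transpose {n : Type*} [Fintype n] [DecidableEq n] (B : Matrix n n ℂ) :
    spectrum ℂ Bᵀ = spectrum ℂ B := by
  ext μ
  rw [mem_spectrum_iff_det', mem_spectrum_iff_det']
  have h : μ • (1 : Matrix n n ℂ) - Bᵀ = (μ • (1 : Matrix n n ℂ) - B)ᵀ := by
    rw [Matrix.transpose_sub, Matrix.transpose_smul, Matrix.transpose_one]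
  rw [h, Matrix.det_transpose]

lemma map_transpose' : (Mᵀ).map Complex.ofReal = ((M.map Complex.ofReal))ᵀ := rfl

lemma spectrum_facts (hK : 0 < K)
    (hrad : sSup ((fun z : ℂ => ‖z‖) '' spectrum ℂ (M.map Complex.ofReal)) = 1) :
    (∀ μ ∈ spectrum ℂ (M.map Complex.ofReal), ‖μ‖ ≤ 1) ∧
    (∃ μ ∈ spectrum ℂ (M.map Complex.ofReal), ‖μ‖ = 1) := by
  have : Nonempty (Fin K) := Fin.pos_iff_nonempty.mp hK
  set Mc := M.map Complex.ofReal with hMc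
  have hfin : (spectrum ℂ Mc).Finite := by
    have hsub : spectrum ℂ Mc ⊆ {μ | Mc.charpoly.IsRoot μ} := by
      intro μ hμ
      exact (mem_spectrum_iff_root Mc μ).mp hμ
    exact Set.Finite.subset (Polynomial.finite_setOf_isRoot Mc.charpoly_monic.ne_zero) hsub
  have hnon : (spectrum ℂ Mc).Nonempty :=
    spectrum.nonempty_of_isAlgClosed_of_finiteDimensional ℂ Mc
  have hfin' : ((fun z : ℂ => ‖z‖) '' spectrum ℂ Mc).Finite := hfin.image _
  have hnon' : ((fun z : ℂ => ‖z‖) '' spectrum ℂ Mc).Nonempty := hnon.image _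
  constructor
  · intro μ hμ
    rw [← hrad]
    exact le_csSup hfin'.bddAbove ⟨μ, hμ, rfl⟩
  · have := hnon'.csSup_mem hfin'
    rw [hrad] at this
    obtain ⟨μ, hμ, hab⟩ := this
    exact ⟨μ, hμ, hab⟩

lemma exists_subinvariant (hM : ∀ i j, 0 ≤ M i j)
    (hev : ∃ μ ∈ spectrum ℂ (M.map Complex.ofReal), ‖μ‖ = 1) :
    ∃ w : Fin K → ℝ, (∀ i, 0 ≤ w i) ∧ w ≠ 0 ∧ ∀ i, w i ≤ (M.mulVec w) i := by
  obtain ⟨μ, hμ, habs⟩ := hev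
  set Mc := M.map Complex.ofReal with hMc
  have hdet : (μ • (1 : Matrix (Fin K) (Fin K) ℂ) - Mc).det = 0 :=
    (mem_spectrum_iff_det' Mc μ).mp hμ
  obtain ⟨v, hv, hmul⟩ := Matrix.exists_mulVec_eq_zero_iff.mpr hdet
  have heig : Mc.mulVec v = μ • v := by
    have h1 : (μ • (1 : Matrix (Fin K) (Fin K) ℂ) - Mc).mulVec v
        = μ • v - Mc.mulVec v := by
      rw [Matrix.sub_mulVec, Matrix.smul_mulVec, Matrix.one_mulVec]
    rw [h1] at hmul
    linear_combination (norm := module) -hmul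
  refine ⟨fun i => ‖v i‖, fun i => norm_nonneg _, ?_, ?_⟩
  · intro h
    apply hv
    funext i
    have := congrFun h i
    simpa using this
  · intro i
    have h1 : (M.mulVec (fun j => ‖v j‖)) i
        = ∑ j, ‖(Mc i j) * v j‖ := by
      rw [mulVec_apply']
      refine Finset.sum_congr rfl fun j _ => ?_
      rw [norm_mul]
      have hh : ‖Mc i j‖ = M i j := by
        rw [hMc]
        simp [Matrix.map_apply, Complex.norm_real, Real.norm_eq_abs, abs_of_nonneg (hM i j)]
      rw [hh]
    have h2 : ‖(Mc.mulVec v) i‖ ≤ ∑ j, ‖(Mc i j) * v j‖ := by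
      rw [Matrix.mulVec, dotProduct]
      exact norm_sum_le _ _
    have h3 : ‖(Mc.mulVec v) i‖ = ‖v i‖ := by
      rw [heig]
      simp [habs]
    rw [h1]
    calc ‖v i‖ = ‖(Mc.mulVec v) i‖ := h3.symm
    _ ≤ _ := h2

lemma exists_pos_eigenvector (hK : 0 < K) (hM : ∀ i j, 0 ≤ M i j)
    (hirr : ∀ i j, ∃ m : ℕ, 0 < m ∧ 0 < (M ^ m) i j)
    (hle : ∀ μ ∈ spectrum ℂ (M.map Complex.ofReal), ‖μ‖ ≤ 1)
    (hev : ∃ μ ∈ spectrum ℂ (M.map Complex.ofReal), ‖μ‖ = 1) :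
    ∃ w : Fin K → ℝ, (∀ i, 0 < w i) ∧ M.mulVec w = w := by
  refine exists_pos_fixed M hK hM hirr ?_ (exists_subinvariant M hM hev)
  obtain ⟨C, hC, hCle⟩ := entry_pow_le M hK hM hirr hle
  exact ⟨C, hC, hCle⟩

end Spec

section Alg
variable {K : ℕ} (M : Matrix (Fin K) (Fin K) ℝ)

/-- kernel of `M - 1` is spanned by the positive eigenvector. -/
lemma kernel_char (hirr : ∀ i j, ∃ m : ℕ, 0 < m ∧ 0 < (M ^ m) i j)
    (hM : ∀ i j, 0 ≤ M i j) {Y : Fin K → ℝ} (hYpos : ∀ i, 0 < Y i)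
    (hY : M.mulVec Y = Y) {z : Fin K → ℝ} (hz : M.mulVec z = z) (hK : 0 < K) :
    ∃ t : ℝ, z = t • Y := by
  have : Nonempty (Fin K) := Fin.pos_iff_nonempty.mp hK
  obtain ⟨i0, -, hi0⟩ := Finset.exists_mem_eq_inf' (Finset.univ_nonempty) (fun i => z i / Y i)
  set t : ℝ := Finset.univ.inf' Finset.univ_nonempty (fun i => z i / Y i) with ht
  refine ⟨t, ?_⟩
  set z' : Fin K → ℝ := z - t • Y with hz'
  have hz'fix : M.mulVec z' = z' := by
    rw [hz', Matrix.mulVec_sub, hz, Matrix.mulVec_smul, hY]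
  have hz'0 : ∀ i, 0 ≤ z' i := by
    intro i
    have h1 : t ≤ z i / Y i := Finset.inf'_le _ (Finset.mem_univ i)
    have h2 : t * Y i ≤ z i := by
      rw [le_div_iff₀ (hYpos i)] at h1
      linarith
    simp only [hz', Pi.sub_apply, Pi.smul_apply, smul_eq_mul]
    linarith
  have hz'i0 : z' i0 = 0 := by
    simp only [hz', Pi.sub_apply, Pi.smul_apply, smul_eq_mul]
    have : t = z i0 / Y i0 := hi0
    rw [this, div_mul_cancel₀ _ (hYpos i0).ne']
    ring
  by_cases hz'z : z' = 0
  · have := congrArg (· + t • Y) hz'z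
    simpa [hz'] using this
  · exfalso
    have := fixed_pos M hirr hz'0 hz'z hM hz'fix i0
    rw [hz'i0] at this
    exact lt_irrefl 0 this

end Alg

lemma smul_vecMulVec_mulVec {K : ℕ} (s : ℝ) (Y X z : Fin K → ℝ) :
    (s • Matrix.vecMulVec Y X).mulVec z = (s * (X ⬝ᵥ z)) • Y := by
  funext i
  rw [mulVec_apply']
  simp only [Matrix.smul_apply, Matrix.vecMulVec_apply, smul_eq_mul, Pi.smul_apply,
    dotProduct]
  rw [Finset.mul_sum, Finset.sum_mul]
  refine Finset.sum_congr rfl fun j _ => by ring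


end PerronFrobeniusAux

open Matrix Polynomial in
/-- for an irreducible nonnegative `K×K` matrix `M` with spectral
radius 1, the cofactor matrix of `M − I` has rank 1 and its transpose (the
adjugate of `M − I`) equals `λ · Y Xᵀ` for some nonzero `λ`, where `X` is a
positive left 1-eigenvector and `Y` a positive right 1-eigenvector of `M`. -/
theorem cofactor_of_critical_matrix_rank_one
    (K : ℕ) (M : Matrix (Fin K) (Fin K) ℝ)
    (hnonneg : ∀ i j, 0 ≤ M i j)
    (hirr : ∀ i j, ∃ m : ℕ, 0 < m ∧ 0 < (M ^ m) i j)
    (hrad : matrixSpectralRadius M = 1) :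
    ∃ (lam : ℝ) (X Y : Fin K → ℝ),
      lam ≠ 0 ∧
      (∀ i, 0 < X i) ∧ (∀ i, 0 < Y i) ∧
      Matrix.vecMul X M = X ∧ M.mulVec Y = Y ∧
      Matrix.adjugate (M - 1) = lam • Matrix.vecMulVec Y X ∧
      (Matrix.adjugate (M - 1)).rank = 1 := by
  rw [matrixSpectralRadius] at hrad
  rcases Nat.eq_zero_or_pos K with rfl | hK
  · exfalso
    have hsub : Subsingleton (Matrix (Fin 0) (Fin 0) ℂ) :=
      ⟨fun a b => by ext i j; exact i.elim0⟩
    have hspec : spectrum ℂ (M.map Complex.ofReal) = ∅ := by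
      ext μ
      simp only [Set.mem_empty_iff_false, iff_false]
      intro hμ
      exact (spectrum.mem_iff.mp hμ) (@isUnit_of_subsingleton _ _ hsub _)
    rw [hspec] at hrad
    simp only [Set.image_empty, Real.sSup_empty] at hrad
    norm_num at hrad
  have hne : Nonempty (Fin K) := Fin.pos_iff_nonempty.mp hK
  obtain ⟨i1⟩ := hne
  have hne : Nonempty (Fin K) := ⟨i1⟩
  obtain ⟨hle, hev⟩ := spectrum_facts M hK hrad
  -- transpose facts
  have hTnn : ∀ i j, 0 ≤ Mᵀ i j := fun i j => hnonneg j i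
  have hTirr : ∀ i j, ∃ m : ℕ, 0 < m ∧ 0 < (Mᵀ ^ m) i j := by
    intro i j
    obtain ⟨m, hm, hp⟩ := hirr j i
    refine ⟨m, hm, ?_⟩
    rw [← Matrix.transpose_pow]
    simpa using hp
  have hspecT : spectrum ℂ ((Mᵀ).map Complex.ofReal) = spectrum ℂ (M.map Complex.ofReal) := by
    rw [map_transpose' M, spectrum_transpose]
  obtain ⟨Y, hYpos, hY⟩ := exists_pos_eigenvector M hK hnonneg hirr hle hev
  obtain ⟨X, hXpos, hXT⟩ := exists_pos_eigenvector Mᵀ hK hTnn hTirr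
    (by rw [hspecT]; exact hle) (by rw [hspecT]; exact hev)
  have hX : Matrix.vecMul X M = X := by rw [← Matrix.mulVec_transpose]; exact hXT
  have hYne : Y ≠ 0 := fun h => (hYpos i1).ne' (congrFun h i1)
  set A : Matrix (Fin K) (Fin K) ℝ := M - 1 with hA
  have hAY : A.mulVec Y = 0 := by
    rw [hA, Matrix.sub_mulVec, hY, Matrix.one_mulVec, sub_self]
  have hXA : Matrix.vecMul X A = 0 := by
    rw [hA, Matrix.vecMul_sub, hX, Matrix.vecMul_one, sub_self]
  have hdet : A.det = 0 := by
    rw [← Matrix.exists_mulVec_eq_zero_iff]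
    exact ⟨Y, hYne, hAY⟩
  have hker : ∀ z : Fin K → ℝ, A.mulVec z = 0 → ∃ t : ℝ, z = t • Y := by
    intro z hz
    refine kernel_char M hirr hnonneg hYpos hY ?_ hK
    rw [hA, Matrix.sub_mulVec, Matrix.one_mulVec] at hz
    exact sub_eq_zero.mp hz
  have hkerT : ∀ z : Fin K → ℝ, Matrix.vecMul z A = 0 → ∃ t : ℝ, z = t • X := by
    intro z hz
    refine kernel_char Mᵀ hTirr hTnn hXpos hXT ?_ hK
    rw [Matrix.mulVec_transpose]
    rw [hA, Matrix.vecMul_sub, Matrix.vecMul_one] at hz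
    exact sub_eq_zero.mp hz
  set Adj : Matrix (Fin K) (Fin K) ℝ := Matrix.adjugate A with hAdj
  have hmulAdj : A * Adj = 0 := by
    rw [hAdj, Matrix.mul_adjugate, hdet, zero_smul]
  have hAdjmul : Adj * A = 0 := by
    rw [hAdj, Matrix.adjugate_mul, hdet, zero_smul]
  have hcol : ∀ j, ∃ t : ℝ, (fun i => Adj i j) = t • Y := by
    intro j
    apply hker
    funext i
    have h1 : (A * Adj) i j = 0 := by rw [hmulAdj]; rfl
    rw [Matrix.mul_apply] at h1
    rw [mulVec_apply']
    exact h1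
  choose t ht using hcol
  have hAdjapp : ∀ i j, Adj i j = t j * Y i := by
    intro i j
    have := congrFun (ht j) i
    simpa using this
  have htA : Matrix.vecMul t A = 0 := by
    funext j
    have h1 : (Adj * A) i1 j = 0 := by rw [hAdjmul]; rfl
    rw [Matrix.mul_apply] at h1
    have h2 : ∑ k, Adj i1 k * A k j = Y i1 * ∑ k, t k * A k j := by
      rw [Finset.mul_sum]
      exact Finset.sum_congr rfl fun k _ => by rw [hAdjapp i1 k]; ring
    rw [h2] at h1
    have h3 : ∑ k, t k * A k j = 0 := by
      rcases mul_eq_zero.mp h1 with h | h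
      · exact absurd h (hYpos i1).ne'
      · exact h
    simpa [Matrix.vecMul, dotProduct] using h3
  obtain ⟨s, hs⟩ := hkerT t htA
  have hAdjeq : Adj = s • Matrix.vecMulVec Y X := by
    ext i j
    rw [hAdjapp i j]
    have : t j = s * X j := by simpa using congrFun hs j
    rw [this]
    simp only [Matrix.smul_apply, Matrix.vecMulVec_apply, smul_eq_mul]
    ring
  -- nonvanishing of the adjugate
  have hAdjne : Adj i1 i1 ≠ 0 := by
    rw [hAdj, Matrix.adjugate_apply]
    intro hdet0
    obtain ⟨z, hzne, hz0⟩ := Matrix.exists_mulVec_eq_zero_iff.mpr hdet0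
    have hzi1 : z i1 = 0 := by
      have h := congrFun hz0 i1
      rw [show ((A.updateRow i1 (Pi.single i1 1)) *ᵥ z) i1
          = (A.updateRow i1 (Pi.single i1 1)) i1 ⬝ᵥ z from rfl,
        Matrix.updateRow_self, single_dotProduct, one_mul] at h
      exact h
    have hAz : ∀ k, k ≠ i1 → (A.mulVec z) k = 0 := by
      intro k hk
      have h := congrFun hz0 k
      rw [show ((A.updateRow i1 (Pi.single i1 1)) *ᵥ z) k
          = (A.updateRow i1 (Pi.single i1 1)) k ⬝ᵥ z from rfl,
        Matrix.updateRow_ne hk] at h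
      exact h
    have hdot : X ⬝ᵥ A.mulVec z = 0 := by
      rw [dotProduct_mulVec, hXA, zero_dotProduct]
    have hsum : X ⬝ᵥ A.mulVec z = X i1 * (A.mulVec z) i1 := by
      rw [dotProduct]
      rw [Finset.sum_eq_single i1]
      · intro k _ hk
        rw [hAz k hk, mul_zero]
      · intro h
        exact absurd (Finset.mem_univ i1) h
    have hAzi1 : (A.mulVec z) i1 = 0 := by
      rcases mul_eq_zero.mp (hsum ▸ hdot) with h | h
      · exact absurd h (hXpos i1).ne'
      · exact h
    have hAz0 : A.mulVec z = 0 := by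
      funext k
      rcases eq_or_ne k i1 with rfl | hk
      · exact hAzi1
      · exact hAz k hk
    obtain ⟨τ, hτ⟩ := hker z hAz0
    have hτ0 : τ = 0 := by
      have h := congrFun hτ i1
      rw [hzi1] at h
      simp only [Pi.smul_apply, smul_eq_mul] at h
      rcases mul_eq_zero.mp h.symm with h' | h'
      · exact h'
      · exact absurd h' (hYpos i1).ne'
    apply hzne
    rw [hτ, hτ0, zero_smul]
  have hsne : s ≠ 0 := by
    intro h
    apply hAdjne
    rw [hAdjeq, h, zero_smul]
    rfl
  -- rank
  have hXX : 0 < X ⬝ᵥ X := by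
    rw [dotProduct]
    exact Finset.sum_pos (fun j _ => mul_pos (hXpos j) (hXpos j)) Finset.univ_nonempty
  have hrank : Adj.rank = 1 := by
    have hrange : LinearMap.range Adj.mulVecLin = Submodule.span ℝ {Y} := by
      apply le_antisymm
      · rintro u ⟨z, rfl⟩
        rw [Matrix.mulVecLin_apply, hAdjeq, smul_vecMulVec_mulVec]
        exact Submodule.smul_mem _ _ (Submodule.mem_span_singleton_self Y)
      · rw [Submodule.span_le, Set.singleton_subset_iff]
        refine ⟨(s * (X ⬝ᵥ X))⁻¹ • X, ?_⟩
        rw [Matrix.mulVecLin_apply, hAdjeq, Matrix.mulVec_smul, smul_vecMulVec_mulVec]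
        rw [smul_smul, inv_mul_cancel₀ (mul_ne_zero hsne hXX.ne'), one_smul]
    show Module.finrank ℝ (LinearMap.range Adj.mulVecLin) = 1
    rw [hrange]
    exact finrank_span_singleton hYne
  exact ⟨s, X, Y, hsne, hXpos, hYpos, hX, hY, hAdjeq, hrank⟩
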